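/- arXiv:2405.20753 — 2 statements merged into one kernel-verified Lean document; each statement's English description precedes it below -/
import Mathlib

section
/- Let B be a strong bimonoid such that for each monadic ranked alphabet Σ and each (Σ,B)-weighted tree automaton 𝒜, the set im(⟦𝒜⟧_init) is finite. Then B is bi-locally finite. -/
/-- A strong bimonoid: `(B,+,0)` a commutative monoid, `(B,*,1)` a monoid,
and `0` annihilating for `*`. -/
class StrongBimonoid (B : Type*) extends AddCommMonoid B, MonoidWithZero B

section Defs

variable {B : Type*} [StrongBimonoid B]

/-- The closure `⟨A⟩_{⊕,⊗,0,1}` of a subset `A`: the smallest subset of `B`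
containing `A ∪ {0,1}` and closed under `+` and `*`. -/
inductive SBClosure (A : Set B) : B → Prop
  | base {a : B} : a ∈ A → SBClosure A a
  | zero : SBClosure A 0
  | one : SBClosure A 1
  | add {a b : B} : SBClosure A a → SBClosure A b → SBClosure A (a + b)
  | mul {a b : B} : SBClosure A a → SBClosure A b → SBClosure A (a * b)

/-- `B` is locally finite if the closure of each finite subset is finite. -/
def SBLocallyFinite (B : Type*) [StrongBimonoid B] : Prop :=
  ∀ A : Set B, A.Finite → {b : B | SBClosure A b}.Finite

/-- The weak closure `wcl(A)`: the smallest subset containing `A ∪ {0,1}` closed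
under addition and under multiplication on the right by elements of `A`. -/
inductive WeakClosure (A : Set B) : B → Prop
  | base {a : B} : a ∈ A → WeakClosure A a
  | zero : WeakClosure A 0
  | one : WeakClosure A 1
  | add {b b' : B} : WeakClosure A b → WeakClosure A b' → WeakClosure A (b + b')
  | mulr {b a : B} : WeakClosure A b → a ∈ A → WeakClosure A (b * a)

/-- `B` is weakly locally finite if the weak closure of each finite subset is finite. -/
def WeaklyLocallyFinite (B : Type*) [StrongBimonoid B] : Prop :=
  ∀ A : Set B, A.Finite → {b : B | WeakClosure A b}.Finite

/-- `B` is additively locally finite if each finitely generated submonoid of `(B,+,0)` is finite. -/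
def AddLocallyFinite (B : Type*) [StrongBimonoid B] : Prop :=
  ∀ A : Set B, A.Finite → ((AddSubmonoid.closure A : AddSubmonoid B) : Set B).Finite

/-- `B` is multiplicatively locally finite if each finitely generated submonoid of `(B,*,1)` is finite. -/
def MulLocallyFinite (B : Type*) [StrongBimonoid B] : Prop :=
  ∀ A : Set B, A.Finite → ((Submonoid.closure A : Submonoid B) : Set B).Finite

/-- `B` is bi-locally finite if it is additively and multiplicatively locally finite. -/
def BiLocallyFinite (B : Type*) [StrongBimonoid B] : Prop :=
  AddLocallyFinite B ∧ MulLocallyFinite B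

/-- `B` is almost idempotent if `b + b + b = b + b` for all `b`. -/
def AlmostIdempotent (B : Type*) [StrongBimonoid B] : Prop :=
  ∀ b : B, b + b + b = b + b

/-- right-distributivity -/
def SBRightDistributive (B : Type*) [StrongBimonoid B] : Prop :=
  ∀ a b c : B, (a + b) * c = a * c + b * c

/-- left-distributivity -/
def SBLeftDistributive (B : Type*) [StrongBimonoid B] : Prop :=
  ∀ a b c : B, a * (b + c) = a * b + a * c

end Defs

/-- A ranked alphabet: a finite nonempty set of symbols with a rank map,
having at least one nullary symbol. -/
structure RankedAlphabet where
  symb : Type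
  fintype_symb : Fintype symb
  nonempty_symb : Nonempty symb
  rk : symb → ℕ
  exists_nullary : ∃ σ, rk σ = 0

attribute [instance] RankedAlphabet.fintype_symb RankedAlphabet.nonempty_symb

/-- Trees (ground terms) over a ranked alphabet. -/
inductive RTree (S : RankedAlphabet) : Type
  | node (σ : S.symb) (ts : Fin (S.rk σ) → RTree S) : RTree S

/-- A weighted tree automaton over the ranked alphabet `S` and the strong bimonoid `B`. -/
structure WTA (S : RankedAlphabet) (B : Type) [StrongBimonoid B] where
  Q : Type
  fintypeQ : Fintype Q
  nonemptyQ : Nonempty Q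
  δ : (σ : S.symb) → (Fin (S.rk σ) → Q) → Q → B
  F : Q → B

attribute [instance] WTA.fintypeQ WTA.nonemptyQ

variable {S : RankedAlphabet} {B : Type} [StrongBimonoid B]

/-- The vector `h_𝒜(t) ∈ B^Q`:
`h_𝒜(σ(t_1,…,t_k))_q = ⊕_{q_1⋯q_k ∈ Q^k} (⊗_i h_𝒜(t_i)_{q_i}) ⊗ δ_k(q_1⋯q_k,σ,q)`. -/
def WTA.h (M : WTA S B) : RTree S → M.Q → B
  | .node σ ts => fun q =>
      ∑ qs : Fin (S.rk σ) → M.Q,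
        (((List.finRange (S.rk σ)).map (fun i => M.h (ts i) (qs i))).prod) * M.δ σ qs q

/-- The initial algebra semantics `⟦𝒜⟧_init(t) = ⊕_{q ∈ Q} h_𝒜(t)_q ⊗ F_q`. -/
noncomputable def WTA.initSem (M : WTA S B) (t : RTree S) : B :=
  ∑ q, M.h t q * M.F q


section Aux

/-- Monadic alphabet: one nullary symbol (`none`) and one unary symbol `some a` per `a ∈ A`. -/
def chainAlphabet (A : Type) [Fintype A] : RankedAlphabet where
  symb := Option A
  fintype_symb := inferInstance
  nonempty_symb := ⟨none⟩
  rk := fun o => o.elim 0 fun _ => 1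
  exists_nullary := ⟨none, rfl⟩

/-- Chain tree encoding a list. -/
def chainTree {A : Type} [Fintype A] : List A → RTree (chainAlphabet A)
  | [] => .node (S := chainAlphabet A) none Fin.elim0
  | a :: l => .node (S := chainAlphabet A) (some a) fun _ => chainTree l

variable {A : Type} [Fintype A] {B : Type} [StrongBimonoid B]

lemma h_chain_nil (M : WTA (chainAlphabet A) B) (q : M.Q) :
    M.h (chainTree ([] : List A)) q = M.δ none Fin.elim0 q := by
  show (∑ qs : Fin 0 → M.Q,
      ((List.finRange 0).map fun i => M.h (Fin.elim0 i) (qs i)).prod * M.δ none qs q) = _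
  haveI : Unique (Fin 0 → M.Q) := Pi.uniqueOfIsEmpty _
  rw [Fintype.sum_unique]
  have : (default : Fin 0 → M.Q) = Fin.elim0 := funext fun i => i.elim0
  simp [this]

lemma h_chain_cons (M : WTA (chainAlphabet A) B) (a : A) (l : List A) (q : M.Q) :
    M.h (chainTree (a :: l)) q
      = ∑ b : M.Q, M.h (chainTree l) b * M.δ (some a) (fun _ => b) q := by
  show (∑ qs : Fin 1 → M.Q,
      ((List.finRange 1).map fun i => M.h (chainTree l) (qs i)).prod * M.δ (some a) qs q) = _
  refine Fintype.sum_equiv (Equiv.funUnique (Fin 1) M.Q) _ _ fun qs => ?_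
  have hqs : qs = fun _ => qs 0 := funext fun i => by
    have : i = 0 := Subsingleton.elim _ _
    rw [this]
  rw [hqs]
  have h1 : List.finRange 1 = [0] := rfl
  simp only [h1, List.map_cons, List.map_nil, List.prod_cons, List.prod_nil, mul_one,
    Equiv.funUnique_apply, Pi.default_def]
  rfl

/-- One-state wta computing products along a chain. -/
def mulWTA (B : Type) [StrongBimonoid B] (f : A → B) : WTA (chainAlphabet A) B where
  Q := PUnit
  fintypeQ := inferInstance
  nonemptyQ := ⟨⟨⟩⟩
  δ := fun σ => σ.elim (fun _ _ => 1) (fun a _ _ => f a)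
  F := fun _ => 1

lemma mulWTA_h (f : A → B) : ∀ l : List A, ∀ q,
    (mulWTA B f).h (chainTree l) q = ((l.map f).reverse).prod
  | [], q => by
      rw [h_chain_nil]
      simp [mulWTA]
  | a :: l, q => by
      rw [h_chain_cons]
      haveI : Unique (mulWTA B f).Q := ⟨⟨PUnit.unit⟩, fun _ => rfl⟩
      rw [Fintype.sum_unique, mulWTA_h f l]
      show (List.map f l).reverse.prod * f a = ((a :: l).map f).reverse.prod
      simp

/-- Two-state wta computing sums along a chain. -/
def addWTA (B : Type) [StrongBimonoid B] (f : A → B) : WTA (chainAlphabet A) B where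
  Q := Bool
  fintypeQ := inferInstance
  nonemptyQ := ⟨true⟩
  δ := fun σ qs q =>
    match σ, qs with
    | none, _ => if q then 0 else 1
    | some a, qs =>
      match qs ⟨0, Nat.one_pos⟩, q with
      | false, false => 1
      | false, true => f a
      | true, true => 1
      | true, false => 0
  F := fun q => if q then 1 else 0

lemma addWTA_h (f : A → B) : ∀ l : List A,
    (addWTA B f).h (chainTree l) false = 1 ∧
    (addWTA B f).h (chainTree l) true = (l.map f).sum
  | [] => by
      erw [h_chain_nil, h_chain_nil]
      exact ⟨rfl, rfl⟩
  | a :: l => by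
      obtain ⟨ih1, ih2⟩ := addWTA_h f l
      erw [h_chain_cons, h_chain_cons]
      have hsum : ∀ g : Bool → B, ∑ b : Bool, g b = g true + g false := fun g => by
        simp [Fintype.sum_bool]
      constructor
      · show (∑ b : Bool, (addWTA B f).h (chainTree l) b
            * (addWTA B f).δ (some a) (fun _ => b) false) = 1
        rw [hsum]
        show (addWTA B f).h (chainTree l) true * 0
            + (addWTA B f).h (chainTree l) false * 1 = 1
        rw [ih1, ih2, mul_zero, mul_one, zero_add]
      · show (∑ b : Bool, (addWTA B f).h (chainTree l) b
            * (addWTA B f).δ (some a) (fun _ => b) true) = ((a :: l).map f).sum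
        rw [hsum]
        show (addWTA B f).h (chainTree l) true * 1
            + (addWTA B f).h (chainTree l) false * f a = ((a :: l).map f).sum
        rw [ih1, ih2, mul_one, one_mul, List.map_cons, List.sum_cons, add_comm]

lemma mulWTA_initSem (f : A → B) (l : List A) :
    (mulWTA B f).initSem (chainTree l.reverse) = (l.map f).prod := by
  show (∑ q : PUnit, (mulWTA B f).h (chainTree l.reverse) q * 1) = _
  haveI : Unique (mulWTA B f).Q := ⟨⟨PUnit.unit⟩, fun _ => rfl⟩
  erw [Fintype.sum_unique, mul_one, mulWTA_h]
  rw [← List.map_reverse, List.reverse_reverse]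

lemma addWTA_initSem (f : A → B) (l : List A) :
    (addWTA B f).initSem (chainTree l) = (l.map f).sum := by
  show (∑ q : Bool, (addWTA B f).h (chainTree l) q * (if q then 1 else 0)) = _
  rw [Fintype.sum_bool]
  obtain ⟨h1, h2⟩ := addWTA_h f l
  simp [h1, h2]

end Aux

/-- If for each monadic ranked alphabet `Σ` and each wta `𝒜` over `Σ` and `B` the image
of the initial algebra semantics is finite, then `B` is bi-locally finite. -/
theorem statement10 (B : Type) [StrongBimonoid B]
    (h : ∀ S : RankedAlphabet, (∀ σ, S.rk σ ≤ 1) →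
      ∀ M : WTA S B, (Set.range M.initSem).Finite) :
    BiLocallyFinite B := by

  have hrk : ∀ (A : Type) [Fintype A], ∀ σ : (chainAlphabet A).symb, (chainAlphabet A).rk σ ≤ 1 := by
    intro A _ σ; cases σ <;> simp [chainAlphabet]
  constructor
  · -- additive
    intro A hA
    haveI := hA.fintype
    have hfin := h (chainAlphabet ↥A) (hrk ↥A) (addWTA B Subtype.val)
    apply hfin.subset
    intro x hx
    have : ∃ l : List ↥A, (l.map Subtype.val).sum = x := by
      refine AddSubmonoid.closure_induction (fun a ha => ⟨[⟨a, ha⟩], by simp⟩) ⟨[], by simp⟩ ?_ hx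
      rintro y z - - ⟨l₁, rfl⟩ ⟨l₂, rfl⟩
      exact ⟨l₁ ++ l₂, by simp⟩
    obtain ⟨l, rfl⟩ := this
    exact ⟨chainTree l, addWTA_initSem Subtype.val l⟩
  · -- multiplicative
    intro A hA
    haveI := hA.fintype
    have hfin := h (chainAlphabet ↥A) (hrk ↥A) (mulWTA B Subtype.val)
    apply hfin.subset
    intro x hx
    have : ∃ l : List ↥A, (l.map Subtype.val).prod = x := by
      refine Submonoid.closure_induction (fun a ha => ⟨[⟨a, ha⟩], by simp⟩) ⟨[], by simp⟩ ?_ hx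
      rintro y z - - ⟨l₁, rfl⟩ ⟨l₂, rfl⟩
      exact ⟨l₁ ++ l₂, by simp⟩
    obtain ⟨l, rfl⟩ := this
    exact ⟨chainTree l.reverse, mulWTA_initSem Subtype.val l⟩
end

section
/- Let X be a nonempty set. The relation ∼la on S(X), defined by q∼la r iff q=r or both q and r are large, is a congruence on the algebra S(X). -/
/-- Terms over the ranked alphabet `Σ = {+⁽²⁾, ×⁽²⁾, 0⁽⁰⁾, 1⁽⁰⁾}` and the set `X`. -/
inductive STerm (X : Type) : Type
  | zero : STerm X
  | one : STerm X
  | var (x : X) : STerm X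
  | add (s t : STerm X) : STerm X
  | mul (s t : STerm X) : STerm X

namespace STerm

/-- `t.ok` holds iff `t` contains no occurrence of `0`, no subterm `1 × t'` and no
subterm `t' × 1`. -/
def ok {X : Type} : STerm X → Prop
  | zero => False
  | one => True
  | var _ => True
  | add s t => ok s ∧ ok t
  | mul s t => ok s ∧ ok t ∧ s ≠ one ∧ t ≠ one

/-- A term is simple if it is `0`, or it is different from `0` and contains no `0`,
no subterm of the form `1 × t'` and no subterm of the form `t' × 1`. -/
def Simple {X : Type} (t : STerm X) : Prop := t = zero ∨ ok t

end STerm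

/-- The set `ST_Σ(X)` of simple terms. -/
def SimpleT (X : Type) : Type := {t : STerm X // t.Simple}

open Classical in
/-- The addition `+_ST` on simple terms: `t + 0 = 0 + t = t` and `s + t = add s t` otherwise. -/
noncomputable def stAdd {X : Type} (s t : SimpleT X) : SimpleT X :=
  if hs : s.1 = STerm.zero then t
  else if ht : t.1 = STerm.zero then s
  else ⟨STerm.add s.1 t.1, Or.inr ⟨s.2.resolve_left hs, t.2.resolve_left ht⟩⟩

open Classical in
/-- The multiplication `×_ST` on simple terms: `t × 0 = 0 × t = 0`, `t × 1 = 1 × t = t`,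
and `s × t = mul s t` otherwise. -/
noncomputable def stMul {X : Type} (s t : SimpleT X) : SimpleT X :=
  if h0 : s.1 = STerm.zero ∨ t.1 = STerm.zero then ⟨STerm.zero, Or.inl rfl⟩
  else if hs : s.1 = STerm.one then t
  else if ht : t.1 = STerm.one then s
  else ⟨STerm.mul s.1 t.1,
    Or.inr ⟨s.2.resolve_left (fun h => h0 (Or.inl h)),
      t.2.resolve_left (fun h => h0 (Or.inr h)), hs, ht⟩⟩

/-- The simple term `0`. -/
def stZero {X : Type} : SimpleT X := ⟨STerm.zero, Or.inl rfl⟩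

/-- The simple term `1`. -/
def stOne {X : Type} : SimpleT X := ⟨STerm.one, Or.inr trivial⟩

/-- The congruence `≈_E` on `ST_Σ(X)` induced by the identities
`e₁ : z₁+(z₂+z₃) = (z₁+z₂)+z₃`, `e₂ : z₁+z₂ = z₂+z₁`, `e₃ : z₁×(z₂×z₃) = (z₁×z₂)×z₃`,
`e₄ : z₁+z₁ = z₁+(z₁+z₁)`, `e₅ : (z₁+z₂)×z₃ = (z₁×z₃)+(z₂×z₃)`:
the smallest congruence containing all instances of these identities. -/
inductive eqE {X : Type} : SimpleT X → SimpleT X → Prop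
  | addAssoc (a b c : SimpleT X) : eqE (stAdd a (stAdd b c)) (stAdd (stAdd a b) c)
  | addComm (a b : SimpleT X) : eqE (stAdd a b) (stAdd b a)
  | mulAssoc (a b c : SimpleT X) : eqE (stMul a (stMul b c)) (stMul (stMul a b) c)
  | almostIdem (a : SimpleT X) : eqE (stAdd a a) (stAdd a (stAdd a a))
  | rightDistrib (a b c : SimpleT X) :
      eqE (stMul (stAdd a b) c) (stAdd (stMul a c) (stMul b c))
  | refl (a : SimpleT X) : eqE a a
  | symm {a b : SimpleT X} : eqE a b → eqE b a
  | trans {a b c : SimpleT X} : eqE a b → eqE b c → eqE a c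
  | addCongr {a b c d : SimpleT X} : eqE a b → eqE c d → eqE (stAdd a c) (stAdd b d)
  | mulCongr {a b c d : SimpleT X} : eqE a b → eqE c d → eqE (stMul a c) (stMul b d)

instance stSetoid (X : Type) : Setoid (SimpleT X) :=
  ⟨eqE, ⟨eqE.refl, eqE.symm, eqE.trans⟩⟩

/-- The quotient algebra `S(X) = ST_Σ(X)/≈_E`. -/
def SX (X : Type) : Type := Quotient (stSetoid X)

/-- The addition `+_S` of `S(X)`. -/
noncomputable def sAdd {X : Type} : SX X → SX X → SX X :=
  Quotient.map₂ stAdd fun _ _ h1 _ _ h2 => eqE.addCongr h1 h2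

/-- The multiplication `×_S` of `S(X)`. -/
noncomputable def sMul {X : Type} : SX X → SX X → SX X :=
  Quotient.map₂ stMul fun _ _ h1 _ _ h2 => eqE.mulCongr h1 h2

/-- The element `0_S` of `S(X)`. -/
def sZero (X : Type) : SX X := ⟦stZero⟧

/-- The element `1_S` of `S(X)`. -/
def sOne (X : Type) : SX X := ⟦stOne⟧

namespace STerm

/-- Whether a term is of the form `t₁ × t₂`. -/
def isMul {X : Type} : STerm X → Prop
  | mul _ _ => True
  | _ => False

/-- Whether a term has a subterm of the form `t₁×(t₂×t₃)` or `(t₁×t₂)×t₃`. -/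
def nested {X : Type} : STerm X → Prop
  | add s t => nested s ∨ nested t
  | mul s t => isMul s ∨ isMul t ∨ nested s ∨ nested t
  | _ => False

end STerm

/-- An element `p ∈ S(X) ∖ {0_S, 1_S}` is large if `p = [s]_E` for some simple term `s`
having a subterm of the form `t₁×(t₂×t₃)` or `(t₁×t₂)×t₃`. -/
def Large {X : Type} (p : SX X) : Prop :=
  p ≠ sZero X ∧ p ≠ sOne X ∧ ∃ s : SimpleT X, p = ⟦s⟧ ∧ s.1.nested

/-- The relation `∼la`: `q ∼la r` iff `q = r` or both `q` and `r` are large. -/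
def simLa {X : Type} (q r : SX X) : Prop := q = r ∨ (Large q ∧ Large r)

section Aux

open STerm

variable {X : Type}

lemma stAdd_fst_zero (s t : SimpleT X) :
    (stAdd s t).1 = STerm.zero ↔ s.1 = STerm.zero ∧ t.1 = STerm.zero := by
  unfold stAdd; split_ifs with hs ht <;> simp_all

lemma stAdd_fst_one (s t : SimpleT X) :
    (stAdd s t).1 = STerm.one ↔
      (s.1 = STerm.zero ∧ t.1 = STerm.one) ∨ (t.1 = STerm.zero ∧ s.1 = STerm.one) := by
  unfold stAdd; split_ifs with hs ht <;> simp_all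

lemma stMul_fst_zero (s t : SimpleT X) :
    (stMul s t).1 = STerm.zero ↔ s.1 = STerm.zero ∨ t.1 = STerm.zero := by
  unfold stMul; split_ifs with h0 <;> simp_all <;> split_ifs with hs ht <;> simp_all

lemma stMul_fst_one (s t : SimpleT X) :
    (stMul s t).1 = STerm.one ↔ s.1 = STerm.one ∧ t.1 = STerm.one := by
  unfold stMul
  by_cases h0 : s.1 = STerm.zero ∨ t.1 = STerm.zero
  · erw [dif_pos h0]; rcases h0 with h | h <;> simp_all
  · erw [dif_neg h0]
    by_cases hs : s.1 = STerm.one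
    · erw [dif_pos hs]; simp [hs]
    · erw [dif_neg hs]
      by_cases ht : t.1 = STerm.one
      · erw [dif_pos ht]; simp [hs]
      · erw [dif_neg ht]; simp [hs]

lemma eqE_invariant {a b : SimpleT X} (h : eqE a b) :
    (a.1 = STerm.zero ↔ b.1 = STerm.zero) ∧ (a.1 = STerm.one ↔ b.1 = STerm.one) := by
  induction h with
  | addAssoc a b c =>
      constructor <;> simp only [stAdd_fst_zero, stAdd_fst_one] <;> tauto
  | addComm a b =>
      constructor <;> simp only [stAdd_fst_zero, stAdd_fst_one] <;> tauto
  | mulAssoc a b c =>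
      constructor <;> simp only [stMul_fst_zero, stMul_fst_one] <;> tauto
  | almostIdem a =>
      have hza : ¬(a.1 = STerm.zero ∧ a.1 = STerm.one) := by
        rintro ⟨h1, h2⟩; rw [h1] at h2; cases h2
      constructor <;> simp only [stAdd_fst_zero, stAdd_fst_one] <;> tauto
  | rightDistrib a b c =>
      have hzc : ¬(c.1 = STerm.zero ∧ c.1 = STerm.one) := by
        rintro ⟨h1, h2⟩; rw [h1] at h2; cases h2
      constructor <;>
        simp only [stAdd_fst_zero, stAdd_fst_one, stMul_fst_zero, stMul_fst_one] <;> tauto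
  | refl a => exact ⟨Iff.rfl, Iff.rfl⟩
  | symm _ ih => exact ⟨ih.1.symm, ih.2.symm⟩
  | trans _ _ ih1 ih2 => exact ⟨ih1.1.trans ih2.1, ih1.2.trans ih2.2⟩
  | addCongr _ _ ih1 ih2 =>
      constructor <;> simp only [stAdd_fst_zero, stAdd_fst_one, ih1.1, ih1.2, ih2.1, ih2.2]
  | mulCongr _ _ ih1 ih2 =>
      constructor <;> simp only [stMul_fst_zero, stMul_fst_one, ih1.1, ih1.2, ih2.1, ih2.2]

lemma mk_eq_zero {s : SimpleT X} : (⟦s⟧ : SX X) = sZero X ↔ s.1 = STerm.zero := by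
  constructor
  · intro h
    exact ((eqE_invariant (Quotient.exact h)).1).mpr rfl
  · intro h
    have : s = stZero := Subtype.ext h
    rw [this]; rfl

lemma mk_eq_one {s : SimpleT X} : (⟦s⟧ : SX X) = sOne X ↔ s.1 = STerm.one := by
  constructor
  · intro h
    exact ((eqE_invariant (Quotient.exact h)).2).mpr rfl
  · intro h
    have : s = stOne := Subtype.ext h
    rw [this]; rfl

lemma nested_ne {t : STerm X} (h : t.nested) : t ≠ STerm.zero ∧ t ≠ STerm.one := by
  cases t <;> simp_all [STerm.nested]

lemma sAdd_mk (s t : SimpleT X) : sAdd (⟦s⟧ : SX X) ⟦t⟧ = ⟦stAdd s t⟧ := rfl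

lemma sMul_mk (s t : SimpleT X) : sMul (⟦s⟧ : SX X) ⟦t⟧ = ⟦stMul s t⟧ := rfl

lemma stAdd_nested_left {s t : SimpleT X} (h : s.1.nested) : (stAdd s t).1.nested := by
  unfold stAdd; split_ifs with hs ht
  · rw [hs] at h; exact h.elim
  · erw [dif_pos ht]; exact h
  · erw [dif_neg ht]; exact Or.inl h

lemma stAdd_nested_right {s t : SimpleT X} (h : t.1.nested) : (stAdd s t).1.nested := by
  unfold stAdd; split_ifs with hs ht
  · exact h
  · rw [ht] at h; exact h.elim
  · erw [dif_neg ht]; exact Or.inr h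

lemma large_sAdd_left {p : SX X} (hp : Large p) (q : SX X) : Large (sAdd p q) := by
  obtain ⟨h0, h1, s, rfl, hn⟩ := hp
  induction q using Quotient.ind with
  | _ t =>
    rw [sAdd_mk]
    have hn' := stAdd_nested_left (t := t) hn
    exact ⟨fun h => (nested_ne hn').1 (mk_eq_zero.mp h),
           fun h => (nested_ne hn').2 (mk_eq_one.mp h),
           stAdd s t, rfl, hn'⟩

lemma large_sAdd_right {p : SX X} (hp : Large p) (q : SX X) : Large (sAdd q p) := by
  obtain ⟨h0, h1, s, rfl, hn⟩ := hp
  induction q using Quotient.ind with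
  | _ t =>
    rw [sAdd_mk]
    have hn' := stAdd_nested_right (s := t) hn
    exact ⟨fun h => (nested_ne hn').1 (mk_eq_zero.mp h),
           fun h => (nested_ne hn').2 (mk_eq_one.mp h),
           stAdd t s, rfl, hn'⟩

lemma stMul_nested_left {s t : SimpleT X} (h : s.1.nested) (ht : t.1 ≠ STerm.zero) :
    (stMul s t).1.nested := by
  have hs0 := (nested_ne h).1
  have hs1 := (nested_ne h).2
  unfold stMul
  erw [dif_neg (show ¬(s.1 = STerm.zero ∨ t.1 = STerm.zero) by tauto), dif_neg hs1]
  by_cases h1 : t.1 = STerm.one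
  · erw [dif_pos h1]; exact h
  · erw [dif_neg h1]; exact Or.inr (Or.inr (Or.inl h))

lemma stMul_nested_right {s t : SimpleT X} (h : t.1.nested) (hs0 : s.1 ≠ STerm.zero)
    (hs1 : s.1 ≠ STerm.one) : (stMul s t).1.nested := by
  have ht0 := (nested_ne h).1
  have ht1 := (nested_ne h).2
  unfold stMul
  erw [dif_neg (show ¬(s.1 = STerm.zero ∨ t.1 = STerm.zero) by tauto), dif_neg hs1,
    dif_neg ht1]
  exact Or.inr (Or.inr (Or.inr h))

lemma large_sMul_left {p : SX X} (hp : Large p) {q : SX X} (hq : q ≠ sZero X) :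
    Large (sMul p q) := by
  obtain ⟨h0, h1, s, rfl, hn⟩ := hp
  induction q using Quotient.ind with
  | _ t =>
    rw [sMul_mk]
    have ht : t.1 ≠ STerm.zero := fun h => hq (mk_eq_zero.mpr h)
    have hn' := stMul_nested_left hn ht
    exact ⟨fun h => (nested_ne hn').1 (mk_eq_zero.mp h),
           fun h => (nested_ne hn').2 (mk_eq_one.mp h),
           stMul s t, rfl, hn'⟩

lemma large_sMul_right {p : SX X} (hp : Large p) {q : SX X} (hq0 : q ≠ sZero X)
    (hq1 : q ≠ sOne X) : Large (sMul q p) := by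
  obtain ⟨h0, h1, s, rfl, hn⟩ := hp
  induction q using Quotient.ind with
  | _ t =>
    rw [sMul_mk]
    have ht0 : t.1 ≠ STerm.zero := fun h => hq0 (mk_eq_zero.mpr h)
    have ht1 : t.1 ≠ STerm.one := fun h => hq1 (mk_eq_one.mpr h)
    have hn' := stMul_nested_right hn ht0 ht1
    exact ⟨fun h => (nested_ne hn').1 (mk_eq_zero.mp h),
           fun h => (nested_ne hn').2 (mk_eq_one.mp h),
           stMul t s, rfl, hn'⟩

lemma stMul_zero_left (t : SimpleT X) : stMul stZero t = stZero := by
  unfold stMul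
  erw [dif_pos (show (stZero (X := X)).1 = STerm.zero ∨ t.1 = STerm.zero from Or.inl rfl)]; rfl

lemma stMul_zero_right (t : SimpleT X) : stMul t stZero = stZero := by
  unfold stMul
  erw [dif_pos (show t.1 = STerm.zero ∨ (stZero (X := X)).1 = STerm.zero from Or.inr rfl)]; rfl

lemma stMul_one_left (t : SimpleT X) : stMul stOne t = t := by
  unfold stMul
  by_cases h0 : (stOne (X := X)).1 = STerm.zero ∨ t.1 = STerm.zero
  · erw [dif_pos h0]
    rcases h0 with h | h
    · exact absurd h (fun hh => by cases hh)
    · symm; exact Subtype.ext h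
  · erw [dif_neg h0, dif_pos (show (stOne (X := X)).1 = STerm.one from rfl)]

lemma sMul_zero_left (q : SX X) : sMul (sZero X) q = sZero X := by
  induction q using Quotient.ind with
  | _ t => show sMul ⟦stZero⟧ ⟦t⟧ = ⟦stZero⟧; rw [sMul_mk, stMul_zero_left]

lemma sMul_zero_right (q : SX X) : sMul q (sZero X) = sZero X := by
  induction q using Quotient.ind with
  | _ t => show sMul ⟦t⟧ ⟦stZero⟧ = ⟦stZero⟧; rw [sMul_mk, stMul_zero_right]

lemma sMul_one_left (q : SX X) : sMul (sOne X) q = q := by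
  induction q using Quotient.ind with
  | _ t => show sMul ⟦stOne⟧ ⟦t⟧ = ⟦t⟧; rw [sMul_mk, stMul_one_left]

end Aux

/-- The relation `∼la` is a congruence on the algebra `S(X)`: it is an equivalence
relation compatible with the operations `+_S` and `×_S`. -/
theorem statement18 (X : Type) (hX : Nonempty X) :
    Equivalence (simLa (X := X)) ∧
    (∀ a b c d : SX X, simLa a b → simLa c d → simLa (sAdd a c) (sAdd b d)) ∧
    (∀ a b c d : SX X, simLa a b → simLa c d → simLa (sMul a c) (sMul b d)) := by
  refine ⟨⟨fun a => Or.inl rfl, ?_, ?_⟩, ?_, ?_⟩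
  · rintro a b (rfl | ⟨ha, hb⟩)
    · exact Or.inl rfl
    · exact Or.inr ⟨hb, ha⟩
  · rintro a b c (rfl | ⟨ha, hb⟩) (rfl | ⟨hb', hc⟩)
    · exact Or.inl rfl
    · exact Or.inr ⟨hb', hc⟩
    · exact Or.inr ⟨ha, hb⟩
    · exact Or.inr ⟨ha, hc⟩
  · rintro a b c d (rfl | ⟨ha, hb⟩) (rfl | ⟨hc, hd⟩)
    · exact Or.inl rfl
    · exact Or.inr ⟨large_sAdd_right hc a, large_sAdd_right hd a⟩
    · exact Or.inr ⟨large_sAdd_left ha c, large_sAdd_left hb c⟩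
    · exact Or.inr ⟨large_sAdd_left ha c, large_sAdd_left hb d⟩
  · rintro a b c d (rfl | ⟨ha, hb⟩) (rfl | ⟨hc, hd⟩)
    · exact Or.inl rfl
    · by_cases h0 : a = sZero X
      · subst h0
        exact Or.inl (by rw [sMul_zero_left, sMul_zero_left])
      · by_cases h1 : a = sOne X
        · subst h1
          rw [sMul_one_left, sMul_one_left]
          exact Or.inr ⟨hc, hd⟩
        · exact Or.inr ⟨large_sMul_right hc h0 h1, large_sMul_right hd h0 h1⟩
    · by_cases h0 : c = sZero X
      · subst h0
        exact Or.inl (by rw [sMul_zero_right, sMul_zero_right])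
      · exact Or.inr ⟨large_sMul_left ha h0, large_sMul_left hb h0⟩
    · exact Or.inr ⟨large_sMul_left ha hc.1, large_sMul_left hb hd.1⟩
end
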